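/- Fix integers d ≥ 1 and l ≥ 1. For sequences α(N) > 0 and μ_1(N), ..., μ_l(N) > 0 indexed by N ∈ ℕ, suppose μ_1·N^{(d+1)/d}/α → ∞ as N → ∞ and limsup_{N→∞} μ_i/μ_{i+1} < ∞ for each i ∈ {1, ..., l−1}. Then β_l·α/N^{1/d} → 0 as N → ∞, where β_l := (N·α^{(l-1)d}·∏_{i=1}^{l} μ_i)^{-1/((l-1)d+l)}. (Lemma 3.6 of the paper.) -/

import Mathlib

open Filter

/-- `beta d α μ l N` is the quantity
`β_l = (N · α^{(l-1)d} · ∏_{i=1}^{l} μ_i)^{-1/((l-1)d+l)}` from the paper,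
where all quantities depend on `N` and the power is a real power. -/
noncomputable def beta (d : ℕ) (α : ℕ → ℝ) (μ : ℕ → ℕ → ℝ) (l N : ℕ) : ℝ :=
  ((N : ℝ) * α N ^ ((l - 1) * d) * ∏ i ∈ Finset.Icc 1 l, μ i N) ^
    (-(1 / (((l - 1) * d + l : ℕ) : ℝ)))

/-- Lemma 3.6: if `μ_1 ≫ α/N^{(d+1)/d}` and the mutation rates are asymptotically
increasing, then `β_l ≪ N^{1/d}/α`. -/
theorem stmt3 (d l : ℕ) (hd : 1 ≤ d) (hl : 1 ≤ l)
    (α : ℕ → ℝ) (μ : ℕ → ℕ → ℝ)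
    (hα : ∀ N, 0 < α N) (hμ : ∀ i, 1 ≤ i → i ≤ l → ∀ N, 0 < μ i N)
    (h1 : Tendsto (fun N => μ 1 N * (N : ℝ) ^ (((d : ℝ) + 1) / d) / α N) atTop atTop)
    (hinc : ∀ i, 1 ≤ i → i ≤ l - 1 →
      IsBoundedUnder (· ≤ ·) atTop (fun N => μ i N / μ (i + 1) N)) :
    Tendsto (fun N => beta d α μ l N * α N / (N : ℝ) ^ (1 / (d : ℝ))) atTop (nhds 0) := by
  have hdR : (0:ℝ) < d := by exact_mod_cast hd
  set p : ℝ := ((d:ℝ) + 1) / d with hp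
  have hppos : 0 < p := by positivity
  set M : ℕ := (l - 1) * d + l with hM
  have hM1 : 1 ≤ M := by omega
  have hMR : (0:ℝ) < M := by exact_mod_cast hM1
  -- Step A
  have hA : ∀ i, 1 ≤ i → i ≤ l →
      Tendsto (fun N => μ i N * (N:ℝ) ^ p / α N) atTop atTop := by
    intro i hi
    induction i, hi using Nat.le_induction with
    | base => intro _; exact h1
    | succ n hn ih =>
      intro hnl
      have htn := ih (by omega)
      obtain ⟨C, hC⟩ := hinc n hn (by omega)
      rw [eventually_map] at hC
      have hC' : ∀ᶠ N in atTop, μ n N / μ (n+1) N ≤ max C 1 :=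
        hC.mono fun N h => h.trans (le_max_left _ _)
      have hC'pos : (0:ℝ) < max C 1 := lt_of_lt_of_le one_pos (le_max_right _ _)
      apply tendsto_atTop_mono' atTop ?_ (htn.atTop_div_const hC'pos)
      filter_upwards [hC', eventually_ge_atTop 1] with N hCN hN1
      have hNpos : (0:ℝ) < N := by exact_mod_cast hN1
      have hαN := hα N
      have hμ1 := hμ (n+1) (by omega) hnl N
      have hmm : μ n N ≤ max C 1 * μ (n+1) N := by
        rw [div_le_iff₀ hμ1] at hCN; linarith
      have hre : μ n N * (N:ℝ) ^ p / α N / max C 1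
          = (μ n N / max C 1) * ((N:ℝ) ^ p / α N) := by ring
      rw [hre]
      have h2 : μ n N / max C 1 ≤ μ (n+1) N := by
        rw [div_le_iff₀ hC'pos]; linarith [hmm]
      calc (μ n N / max C 1) * ((N:ℝ) ^ p / α N)
          ≤ μ (n+1) N * ((N:ℝ) ^ p / α N) := by
            apply mul_le_mul_of_nonneg_right h2; positivity
        _ = μ (n+1) N * (N:ℝ) ^ p / α N := by ring
  -- Step B
  have hB : ∀ i ∈ Finset.Icc 1 l,
      Tendsto (fun N => α N / (μ i N * (N:ℝ) ^ p)) atTop (nhds 0) := by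
    intro i hi
    rw [Finset.mem_Icc] at hi
    have := (hA i hi.1 hi.2).inv_tendsto_atTop
    exact this.congr fun N => by simp [inv_div]
  -- Step C
  have hg : Tendsto (fun N => ∏ i ∈ Finset.Icc 1 l, (α N / (μ i N * (N:ℝ) ^ p)))
      atTop (nhds 0) := by
    have h := tendsto_finset_prod (Finset.Icc 1 l) hB
    have hz : (∏ _i ∈ Finset.Icc 1 l, (0:ℝ)) = 0 := by
      rw [Finset.prod_const, Nat.card_Icc]
      exact zero_pow (by omega)
    rwa [hz] at h
  -- Step D
  have hgr := hg.rpow_const (p := 1/(M:ℝ)) (Or.inr (by positivity))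
  rw [Real.zero_rpow (by positivity)] at hgr
  apply hgr.congr'
  filter_upwards [eventually_ge_atTop 1] with N hN1
  have hNpos : (0:ℝ) < N := by exact_mod_cast hN1
  have hαN := hα N
  have hP : 0 < ∏ i ∈ Finset.Icc 1 l, μ i N :=
    Finset.prod_pos fun i hi => by rw [Finset.mem_Icc] at hi; exact hμ i hi.1 hi.2 N
  have hS : 0 < (N:ℝ) * α N ^ ((l-1)*d) * ∏ i ∈ Finset.Icc 1 l, μ i N := by positivity
  set S := (N:ℝ) * α N ^ ((l-1)*d) * ∏ i ∈ Finset.Icc 1 l, μ i N with hSdef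
  have hbeta : beta d α μ l N = S ^ (-(1/(M:ℝ))) := by
    rw [beta, ← hM, ← hSdef]
  have hF : 0 < beta d α μ l N * α N / (N:ℝ) ^ (1/(d:ℝ)) := by
    rw [hbeta]
    have := Real.rpow_pos_of_pos hS (-(1/(M:ℝ)))
    positivity
  have hMcast : (M:ℝ) = ((l:ℝ) - 1) * (d:ℝ) + l := by
    rw [hM]; push_cast [Nat.cast_sub hl]; ring
  have key : (beta d α μ l N * α N / (N:ℝ) ^ (1/(d:ℝ))) ^ (M:ℝ)
      = ∏ i ∈ Finset.Icc 1 l, (α N / (μ i N * (N:ℝ) ^ p)) := by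
    rw [Real.rpow_natCast, div_pow, mul_pow, hbeta]
    rw [← Real.rpow_natCast (S ^ (-(1/(M:ℝ)))) M, ← Real.rpow_mul hS.le]
    rw [← Real.rpow_natCast ((N:ℝ) ^ (1/(d:ℝ))) M, ← Real.rpow_mul hNpos.le]
    rw [Finset.prod_div_distrib, Finset.prod_const, Finset.prod_mul_distrib,
      Finset.prod_const, Nat.card_Icc, Nat.add_sub_cancel]
    have e1 : -(1/(M:ℝ)) * M = -1 := by field_simp
    rw [e1, Real.rpow_neg_one]
    rw [← Real.rpow_natCast ((N:ℝ) ^ p) l, ← Real.rpow_mul hNpos.le]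
    have e2 : (N:ℝ) ^ (p * (l:ℝ)) = (N:ℝ) * (N:ℝ) ^ ((1/(d:ℝ)) * (M:ℝ)) := by
      have e3 : p * (l:ℝ) = 1 + (1/(d:ℝ)) * (M:ℝ) := by
        rw [hp, hMcast]; field_simp; ring
      rw [e3, Real.rpow_add hNpos, Real.rpow_one]
    rw [e2]
    have e4 : α N ^ M = α N ^ ((l-1)*d) * α N ^ l := by rw [hM, pow_add]
    rw [e4, hSdef]
    have hq := Real.rpow_pos_of_pos hNpos ((1/(d:ℝ)) * (M:ℝ))
    field_simp
  rw [← key, ← Real.rpow_mul hF.le, mul_one_div_cancel (ne_of_gt hMR), Real.rpow_one]
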